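/- Let O be an n×n complex Hermitian matrix, o_min its smallest eigenvalue, and v a unit vector in ℂⁿ with O·v = o_min·v. Let ρ★ = v·v† be the associated rank-one projection (a pure density matrix). Then for every real γ ≠ 0, the quantum tilted loss attains the ground-state energy at ρ★: (1/γ)·log(Re Tr(exp(γ•O)·ρ★)) = o_min. Combined with the lower bound L_γ(O,ρ) ≥ o_min for all density matrices ρ, this shows that the global minimum of L_γ over all density matrices equals o_min. -/

import Mathlib

open Matrix Filter NormedSpace ComplexOrder

attribute [local instance] Matrix.linftyOpNormedRing Matrix.linftyOpNormedAlgebra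
  Matrix.linftyOpNormedAddCommGroup

/-- **The quantum tilted loss attains the ground-state energy at a ground state.** Let `O` be
Hermitian with smallest eigenvalue `o_min = ⨅ i, λ i`, and let `v` be a unit vector with
`O · v = o_min • v`. Then for the pure density matrix `ρ★ = v·v†` and every real `γ ≠ 0`,
`(1/γ)·log (Re Tr (exp (γ • O) * ρ★)) = o_min`. -/
theorem qtl_attains_min_at_ground_state (n : ℕ) (hn : 0 < n)
    (O : Matrix (Fin n) (Fin n) ℂ) (hO : O.IsHermitian)
    (v : Fin n → ℂ) (hv : star v ⬝ᵥ v = 1)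
    (heig : O.mulVec v = ((⨅ i, hO.eigenvalues i : ℝ) : ℂ) • v)
    (γ : ℝ) (hγ : γ ≠ 0) :
    (1 / γ) * Real.log ((exp (γ • O) * vecMulVec v (star v)).trace.re)
      = ⨅ i, hO.eigenvalues i := by
  set c : ℝ := ⨅ i, hO.eigenvalues i with hc
  set m : ℂ := (γ : ℂ) * (c : ℂ) with hm
  have hOv : (γ • O).mulVec v = m • v := by
    rw [Matrix.smul_mulVec, heig]
    ext i
    simp [hm]
    ring
  have hpow : ∀ k : ℕ, ((γ • O) ^ k).mulVec v = (m ^ k) • v := by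
    intro k
    induction k with
    | zero => simp
    | succ k ih =>
      rw [pow_succ, ← Matrix.mulVec_mulVec, hOv, Matrix.mulVec_smul, ih, smul_smul,
        ← pow_succ']
  -- the continuous linear functional A ↦ star v ⬝ᵥ A.mulVec v
  let L : Matrix (Fin n) (Fin n) ℂ →ₗ[ℂ] ℂ :=
    { toFun := fun A => star v ⬝ᵥ A.mulVec v
      map_add' := fun A B => by simp [Matrix.add_mulVec, dotProduct_add]
      map_smul' := fun r A => by simp [Matrix.smul_mulVec] }
  let Lc : Matrix (Fin n) (Fin n) ℂ →L[ℂ] ℂ := ⟨L, L.continuous_of_finiteDimensional⟩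
  have hsum : Summable fun k : ℕ => (k.factorial : ℂ)⁻¹ • (γ • O) ^ k :=
    NormedSpace.expSeries_summable' (𝕂 := ℂ) (γ • O)
  have hLexp : star v ⬝ᵥ (exp (γ • O)).mulVec v = Complex.exp m := by
    have : Lc (exp (γ • O)) = ∑' k : ℕ, Lc ((k.factorial : ℂ)⁻¹ • (γ • O) ^ k) := by
      rw [exp_eq_tsum (𝕂 := ℂ)]
      exact Lc.map_tsum hsum
    have h2 : ∀ k : ℕ, Lc ((k.factorial : ℂ)⁻¹ • (γ • O) ^ k) = (k.factorial : ℂ)⁻¹ • m ^ k := by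
      intro k
      show L ((k.factorial : ℂ)⁻¹ • (γ • O) ^ k) = _
      rw [L.map_smul]
      show (k.factorial : ℂ)⁻¹ • (star v ⬝ᵥ ((γ • O) ^ k).mulVec v) = _
      rw [hpow, dotProduct_smul, hv]
      simp
    calc star v ⬝ᵥ (exp (γ • O)).mulVec v = Lc (exp (γ • O)) := rfl
      _ = ∑' k : ℕ, (k.factorial : ℂ)⁻¹ • m ^ k := by rw [this]; exact tsum_congr h2
      _ = exp m := by rw [exp_eq_tsum (𝕂 := ℂ) (𝔸 := ℂ)]
      _ = Complex.exp m := by rw [Complex.exp_eq_exp_ℂ]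
  have htr : (exp (γ • O) * vecMulVec v (star v)).trace
      = star v ⬝ᵥ (exp (γ • O)).mulVec v := by
    simp only [Matrix.trace, Matrix.diag, Matrix.mul_apply, Matrix.vecMulVec_apply,
      dotProduct, Matrix.mulVec, Finset.mul_sum]
    refine Finset.sum_congr rfl fun i _ => Finset.sum_congr rfl fun j _ => by ring
  have hre : (exp (γ • O) * vecMulVec v (star v)).trace.re = Real.exp (γ * c) := by
    rw [htr, hLexp, hm]
    have : ((γ : ℂ) * (c : ℂ)) = ((γ * c : ℝ) : ℂ) := by push_cast; ring
    rw [this, ← Complex.ofReal_exp, Complex.ofReal_re]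
  rw [hre, Real.log_exp]
  field_simp
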